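/- For trees τ, τ̄ with C₊(τ̄, τ) ≠ 0, the following count identities hold: m_Ξ(τ) = m_Ξ(τ̄) + m_Ξ(C₊(τ̄,τ)); m_𝟏(τ̄) + m_X(τ̄) equals the number of planted trees (with multiplicity) in the forest C₊(τ̄,τ); m_𝟏(τ) = m_𝟏(C₊(τ̄,τ)); and m_X(τ) = m_X(C₊(τ̄,τ)). -/
import Mathlib


/-- Trees built from generators `𝟏`, `X i`, `Ξ` by the ternary product
`τ₁,τ₂,τ₃ ↦ I(τ₁)I(τ₂)I(τ₃)`. -/
inductive T (d : ℕ) : Type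
  | one : T d
  | X : Fin d → T d
  | Xi : T d
  | prod : T d → T d → T d → T d
deriving DecidableEq

namespace T

variable {d : ℕ}

/-- The order of a tree, with parameter `δ`. -/
noncomputable def order (δ : ℝ) : T d → ℝ
  | one => -2
  | X _ => -1
  | Xi => -3 + δ
  | prod a b c => 6 + order δ a + order δ b + order δ c

/-- Number of `𝟏`-leaves. -/
def mOne : T d → ℕ
  | one => 1
  | X _ => 0
  | Xi => 0
  | prod a b c => mOne a + mOne b + mOne c

/-- Total number of `X i`-leaves. -/
def mX : T d → ℕ
  | one => 0
  | X _ => 1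
  | Xi => 0
  | prod a b c => mX a + mX b + mX c

/-- Number of noise leaves `Ξ`. -/
def mXi : T d → ℕ
  | one => 0
  | X _ => 0
  | Xi => 1
  | prod a b c => mXi a + mXi b + mXi c

end T

namespace T
/-- Whether a tree is a ternary product (i.e. not a generator). -/
def isProd {d : ℕ} : T d → Bool
  | prod _ _ _ => true
  | _ => false

/-- Membership in `Ñ`: ternary-product trees of order in `(-1, 0)`. -/
def inTildeN {d : ℕ} (δ : ℝ) (τ : T d) : Prop :=
  isProd τ = true ∧ -1 < order δ τ ∧ order δ τ < 0

noncomputable instance {d : ℕ} (δ : ℝ) (τ : T d) : Decidable (inTildeN δ τ) := by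
  unfold inTildeN; infer_instance
end T

/-- Planted trees: `I(τ)` and the derivative-planted trees `I⁺ᵢ(τ)`. -/
inductive PT (d : ℕ) : Type
  | I : T d → PT d
  | Ip : Fin d → T d → PT d
deriving DecidableEq

/-- The cut map `C₊(τ̄, τ)`, returning a forest of planted trees, or `none`
(representing `0`).  This is the recursive definition of Table 1; the zero
conventions `I⁺ᵢ(X_j) = 0` for `j ≠ i`, `I⁺ᵢ(τ) = 0` for `τ ∉ Ñ` and the
projection `p₊` onto planted trees of positive order are built in. -/
noncomputable def Cplus {d : ℕ} (δ : ℝ) : T d → T d → Option (List (PT d))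
  | T.one, T.one => some [PT.I T.one]
  | T.one, T.X j => some [PT.I (T.X j)]
  | T.one, T.prod x y z =>
      if 0 < T.order δ (T.prod x y z) + 2 then some [PT.I (T.prod x y z)] else none
  | T.X i, T.X j => if i = j then some [PT.Ip i (T.X j)] else none
  | T.X i, T.prod x y z =>
      if T.inTildeN δ (T.prod x y z) then some [PT.Ip i (T.prod x y z)] else none
  | T.Xi, T.Xi => some []
  | T.prod a b c, T.prod x y z =>
      match Cplus δ a x, Cplus δ b y, Cplus δ c z with
      | some f1, some f2, some f3 => some (f1 ++ f2 ++ f3)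
      | _, _, _ => none
  | _, _ => none

namespace PT
/-- Leaf counts extended to planted trees. -/
def mOne {d : ℕ} : PT d → ℕ
  | I τ => T.mOne τ
  | Ip _ τ => T.mOne τ

def mX {d : ℕ} : PT d → ℕ
  | I τ => T.mX τ
  | Ip _ τ => T.mX τ

def mXi {d : ℕ} : PT d → ℕ
  | I τ => T.mXi τ
  | Ip _ τ => T.mXi τ
end PT

/-- Leaf counts extended to forests of planted trees, by summation. -/
def FmOne {d : ℕ} (f : List (PT d)) : ℕ := (f.map PT.mOne).sum
def FmX {d : ℕ} (f : List (PT d)) : ℕ := (f.map PT.mX).sum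
def FmXi {d : ℕ} (f : List (PT d)) : ℕ := (f.map PT.mXi).sum

/-- if `C₊(τ̄, τ) ≠ 0` then
`m_Ξ(τ) = m_Ξ(τ̄) + m_Ξ(C₊(τ̄,τ))`, `m_𝟏(τ̄) + m_X(τ̄) = ♯C₊(τ̄,τ)`,
`m_𝟏(τ) = m_𝟏(C₊(τ̄,τ))` and `m_X(τ) = m_X(C₊(τ̄,τ))`. -/
theorem Cplus_leaf_count_identities (d : ℕ) (δ : ℝ) (τbar τ : T d)
    (f : List (PT d)) (h : Cplus δ τbar τ = some f) :
    T.mXi τ = T.mXi τbar + FmXi f ∧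
      T.mOne τbar + T.mX τbar = f.length ∧
      T.mOne τ = FmOne f ∧
      T.mX τ = FmX f := by
  induction τbar generalizing τ f with
  | one =>
    cases τ with
    | one => simp [Cplus] at h; subst h
             simp [T.mXi, T.mOne, T.mX, FmXi, FmOne, FmX, PT.mXi, PT.mOne, PT.mX]
    | X j => simp [Cplus] at h; subst h
             simp [T.mXi, T.mOne, T.mX, FmXi, FmOne, FmX, PT.mXi, PT.mOne, PT.mX]
    | Xi => simp [Cplus] at h
    | prod x y z =>
      simp only [Cplus] at h
      split at h
      · simp only [Option.some.injEq] at h; subst h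
        simp [T.mXi, T.mOne, T.mX, FmXi, FmOne, FmX, PT.mXi, PT.mOne, PT.mX]
      · exact absurd h (by simp)
  | X i =>
    cases τ with
    | one => simp [Cplus] at h
    | X j =>
      simp only [Cplus] at h
      split at h
      · simp only [Option.some.injEq] at h; subst h
        simp [T.mXi, T.mOne, T.mX, FmXi, FmOne, FmX, PT.mXi, PT.mOne, PT.mX]
      · exact absurd h (by simp)
    | Xi => simp [Cplus] at h
    | prod x y z =>
      simp only [Cplus] at h
      split at h
      · simp only [Option.some.injEq] at h; subst h
        simp [T.mXi, T.mOne, T.mX, FmXi, FmOne, FmX, PT.mXi, PT.mOne, PT.mX]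
      · exact absurd h (by simp)
  | Xi =>
    cases τ with
    | one => simp [Cplus] at h
    | X j => simp [Cplus] at h
    | Xi => simp only [Cplus, Option.some.injEq] at h; subst h
            simp [T.mXi, T.mOne, T.mX, FmXi, FmOne, FmX]
    | prod x y z => simp [Cplus] at h
  | prod a b c iha ihb ihc =>
    cases τ with
    | one => simp [Cplus] at h
    | X j => simp [Cplus] at h
    | Xi => simp [Cplus] at h
    | prod x y z =>
      simp only [Cplus] at h
      cases h1 : Cplus δ a x with
      | none => rw [h1] at h; simp at h
      | some f1 =>
      cases h2 : Cplus δ b y with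
      | none => rw [h1, h2] at h; simp at h
      | some f2 =>
      cases h3 : Cplus δ c z with
      | none => rw [h1, h2, h3] at h; simp at h
      | some f3 =>
      rw [h1, h2, h3] at h
      simp only [Option.some.injEq] at h; subst h
      obtain ⟨A1, A2, A3, A4⟩ := iha x f1 h1
      obtain ⟨B1, B2, B3, B4⟩ := ihb y f2 h2
      obtain ⟨C1, C2, C3, C4⟩ := ihc z f3 h3
      simp only [T.mXi, T.mOne, T.mX, FmXi, FmOne, FmX, List.map_append,
        List.sum_append, List.length_append]
      refine ⟨?_, ?_, ?_, ?_⟩ <;>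
        simp only [FmXi, FmOne, FmX] at A1 A2 A3 A4 B1 B2 B3 B4 C1 C2 C3 C4 <;> omega
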